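/- Let n ≥ 1 and for k ≥ 1 define H_k : Mat_n(ℝ) × Mat_n(ℝ) → ℝ by H_k(A,B) = (1/k) tr(A^k). Denote by (ξ_k, η_k) the gradient of H_k at (A,B). Then the functions H_k form a bi-Hamiltonian hierarchy: for every k ≥ 1 and every (A,B) ∈ Mat_n(ℝ) × Mat_n(ℝ), P₁(ξ_k, η_k) = P₀(ξ_{k+1}, η_{k+1}), where P₀(ξ,η) = (η, −ξ) and P₁(ξ,η) = (Aη, −ξA + [B,η]). -/

import Mathlib

/- STATEMENT 4: the functions H_k(A,B) = (1/k) tr(A^k) form a bi-Hamiltonian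
hierarchy: P₁(ξ_k, η_k) = P₀(ξ_{k+1}, η_{k+1}) for every k ≥ 1 and every (A,B),
where (ξ_k, η_k) is the gradient of H_k at (A,B) (with respect to the trace
pairing dF(V,W) = tr(ξV) + tr(ηW)), and the Poisson tensors act by
P₀(ξ,η) = (η, −ξ) and P₁(ξ,η) = (Aη, −ξA + [B,η]). -/

attribute [local instance] Matrix.frobeniusNormedAddCommGroup Matrix.frobeniusNormedSpace

/-- The space of real n×n matrices. -/
abbrev Mat (n : ℕ) := Matrix (Fin n) (Fin n) ℝ

/-- The first component ξ_F of the gradient of F : Mat_n × Mat_n → ℝ,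
characterized by dF_{(A,B)}(V,W) = tr(ξ_F V) + tr(η_F W); encoded via the
Fréchet derivative as (ξ_F)_{ij} = dF(E_{ji}, 0), since tr(ξ E_{ji}) = ξ_{ij}. -/
noncomputable def gradA {n : ℕ} (F : Mat n × Mat n → ℝ) (p : Mat n × Mat n) : Mat n :=
  Matrix.of fun i j => fderiv ℝ F p (Matrix.single j i 1, 0)

/-- The second component η_F of the gradient of F : Mat_n × Mat_n → ℝ. -/
noncomputable def gradB {n : ℕ} (F : Mat n × Mat n → ℝ) (p : Mat n × Mat n) : Mat n :=
  Matrix.of fun i j => fderiv ℝ F p (0, Matrix.single j i 1)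

/-- H_k(A,B) = (1/k) tr(A^k). -/
noncomputable def Hfun (n k : ℕ) : Mat n × Mat n → ℝ :=
  fun p => (1 / (k : ℝ)) * Matrix.trace (p.1 ^ k)

attribute [local instance] Matrix.frobeniusNormedRing Matrix.frobeniusNormedAlgebra

noncomputable def Dpow {n : ℕ} (k : ℕ) (A : Mat n) : Mat n →L[ℝ] Mat n :=
  ∑ i ∈ Finset.range k,
    ((ContinuousLinearMap.mul ℝ (Mat n)).flip (A ^ (k - 1 - i))).comp
      ((ContinuousLinearMap.mul ℝ (Mat n)) (A ^ i))

lemma Dpow_apply {n : ℕ} (k : ℕ) (A V : Mat n) :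
    Dpow k A V = ∑ i ∈ Finset.range k, A ^ i * V * A ^ (k - 1 - i) := by
  rw [Dpow]
  exact ContinuousLinearMap.sum_apply _ _ _

lemma hasFDerivAt_pow'' {n : ℕ} (k : ℕ) (A : Mat n) :
    HasFDerivAt (fun X : Mat n => X ^ k) (Dpow k A) A := by
  induction k with
  | zero =>
      simpa [Dpow] using (hasFDerivAt_const (1 : Mat n) A).congr_fderiv (by ext; rfl)
  | succ k ih =>
      have h := ih.mul' (hasFDerivAt_id A)
      simp only [id_eq] at h
      have h2 : (fun X : Mat n => X ^ (k + 1)) = fun X : Mat n => X ^ k * X :=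
        funext fun X => pow_succ X k
      rw [h2]
      refine h.congr_fderiv (Eq.symm ?_)
      refine ContinuousLinearMap.ext fun V => ?_
      simp only [ContinuousLinearMap.add_apply, ContinuousLinearMap.smul_apply,
        ContinuousLinearMap.smulRight_apply, ContinuousLinearMap.id_apply, Dpow_apply,
        smul_eq_mul]
      change _ = A ^ k * V + Dpow k A V * A
      rw [Dpow_apply]
      rw [Finset.sum_range_succ, Finset.sum_mul]
      have h1 : k + 1 - 1 - k = 0 := by omega
      rw [h1, pow_zero, mul_one, add_comm]
      congr 1
      apply Finset.sum_congr rfl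
      intro i hi
      have hik : i < k := Finset.mem_range.mp hi
      have : k + 1 - 1 - i = (k - 1 - i) + 1 := by omega
      rw [this, pow_succ, mul_assoc, mul_assoc]
      exact (mul_assoc _ _ _).symm

noncomputable def traceCLM (n : ℕ) : Mat n →L[ℝ] ℝ :=
  LinearMap.toContinuousLinearMap (Matrix.traceLinearMap (Fin n) ℝ ℝ)

lemma hasFDerivAt_Hfun {n : ℕ} (k : ℕ) (A B : Mat n) :
    HasFDerivAt (Hfun n k)
      ((1 / (k : ℝ)) • ((traceCLM n).comp
        ((Dpow k A).comp (ContinuousLinearMap.fst ℝ (Mat n) (Mat n))))) (A, B) := by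
  have h1 : HasFDerivAt (fun p : Mat n × Mat n => p.1 ^ k)
      ((Dpow k A).comp (ContinuousLinearMap.fst ℝ (Mat n) (Mat n))) (A, B) :=
    (hasFDerivAt_pow'' k A).comp (A, B) (hasFDerivAt_fst)
  have h2 := ((traceCLM n).hasFDerivAt.comp (A, B) h1).const_smul ((1 : ℝ) / k)
  exact h2

lemma trace_stdBasis_mul {n : ℕ} (i j : Fin n) (M : Mat n) :
    Matrix.trace (Matrix.single j i (1 : ℝ) * M) = M i j := by
  rw [Matrix.trace, Finset.sum_eq_single j
    (fun b _ hb => by simp [Matrix.diag, hb])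
    (by simp)]
  simp [Matrix.diag]

lemma gradB_Hfun {n : ℕ} (k : ℕ) (A B : Mat n) : gradB (Hfun n k) (A, B) = 0 := by
  ext i j
  rw [gradB, (hasFDerivAt_Hfun k A B).fderiv]
  simp [traceCLM]

lemma gradA_Hfun {n : ℕ} (k : ℕ) (hk : 1 ≤ k) (A B : Mat n) :
    gradA (Hfun n k) (A, B) = A ^ (k - 1) := by
  ext i j
  rw [gradA, (hasFDerivAt_Hfun k A B).fderiv]
  simp only [Matrix.of_apply, ContinuousLinearMap.smul_apply, ContinuousLinearMap.comp_apply,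
    ContinuousLinearMap.coe_fst', Dpow_apply, smul_eq_mul, traceCLM,
    LinearMap.coe_toContinuousLinearMap', Matrix.traceLinearMap_apply]
  have key : ∀ m ∈ Finset.range k,
      Matrix.trace (A ^ m * Matrix.single j i (1 : ℝ) * A ^ (k - 1 - m))
        = (A ^ (k - 1)) i j := by
    intro m hm
    have hm' : m < k := Finset.mem_range.mp hm
    rw [Matrix.trace_mul_cycle, ← pow_add]
    have : k - 1 - m + m = k - 1 := by omega
    rw [this, Matrix.trace_mul_comm, trace_stdBasis_mul]
  rw [Matrix.trace_sum, Finset.sum_congr rfl key, Finset.sum_const, Finset.card_range,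
    nsmul_eq_mul]
  have hk0 : (k : ℝ) ≠ 0 := Nat.cast_ne_zero.mpr (by omega)
  field_simp

theorem Hk_biHamiltonian_hierarchy (n : ℕ) (hn : 1 ≤ n) (k : ℕ) (hk : 1 ≤ k)
    (A B : Mat n) :
    -- P₁ applied to grad H_k equals P₀ applied to grad H_{k+1}:
    (A * gradB (Hfun n k) (A, B),
      -(gradA (Hfun n k) (A, B) * A)
        + (B * gradB (Hfun n k) (A, B) - gradB (Hfun n k) (A, B) * B))
    = (gradB (Hfun n (k + 1)) (A, B), -(gradA (Hfun n (k + 1)) (A, B))) := by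
  rw [gradB_Hfun, gradB_Hfun, gradA_Hfun k hk, gradA_Hfun (k + 1) (by omega)]
  have h1 : A ^ (k - 1) * A = A ^ k := by
    rw [← pow_succ]
    congr 1
    omega
  simp [h1]
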